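/- Let Φ be a finite NCIFS, and define the modified partition function Z̃_n(t) = Z_{n-1}(t)·(#I^(n))^{t/d}·(min_{a ∈ I^(n)} ‖Dφ_a^(n)‖)^t and P̃(t) = liminf_{n→∞} (1/n) log Z̃_n(t). Then P̃ is strictly decreasing where finite; more precisely, if t' < t and P̃(t) is finite then P̃(t') ≥ P̃(t) + (t - t')·log(1/η), where η is the uniform contraction constant. -/

import Mathlib

open Metric Set Filter Topology MeasureTheory
open scoped ENNReal

noncomputable section

/-- A non-autonomous conformal iterated function system (NCIFS) on a compact subset `X` of
`ℝ^d`, encoded via the composed maps `wMap m n ω` associated with finite words `ω` occupying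
levels `m, m+1, …, n-1`, together with their conformal derivative norms `segN m n ω = ‖Dφ_ω‖`.
The fields record the standing assumptions: the open set condition, bounded distortion with
constant `K` (both for derivative norms of split words and as two-sided Lipschitz bounds),
and uniform contraction with constant `η < 1`. -/
structure NCIFS (d : ℕ) where
  X : Set (EuclideanSpace ℝ (Fin d))
  hX_compact : IsCompact X
  hX_nonempty : X.Nonempty
  hX_regular : closure (interior X) = X
  hX_convex : Convex ℝ X
  I : ℕ → Type
  hI_ne : ∀ n, Nonempty (I n)
  K : ℝ
  hK : 1 ≤ K
  η : ℝ
  hη_pos : 0 < η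
  hη_lt : η < 1
  /-- `segN m n ω` is the derivative norm `‖Dφ_ω‖` of the word `ω` on levels `m, …, n-1`. -/
  segN : (m n : ℕ) → ((j : Finset.Ico m n) → I j) → ℝ
  segN_pos : ∀ m n ω, 0 < segN m n ω
  /-- uniform contraction -/
  segN_contract : ∀ m n ω, segN m n ω ≤ η ^ (n - m)
  /-- submultiplicativity and bounded distortion for derivative norms of split words -/
  segN_split : ∀ m k n, m ≤ k → k ≤ n →
      ∀ (ω : (j : Finset.Ico m n) → I j) (ω₁ : (j : Finset.Ico m k) → I j)
        (ω₂ : (j : Finset.Ico k n) → I j),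
        (∀ (j : ℕ) (h₁ : j ∈ Finset.Ico m k) (h₂ : j ∈ Finset.Ico m n),
            ω₁ ⟨j, h₁⟩ = ω ⟨j, h₂⟩) →
        (∀ (j : ℕ) (h₁ : j ∈ Finset.Ico k n) (h₂ : j ∈ Finset.Ico m n),
            ω₂ ⟨j, h₁⟩ = ω ⟨j, h₂⟩) →
        segN m n ω ≤ segN m k ω₁ * segN k n ω₂ ∧
          segN m k ω₁ * segN k n ω₂ ≤ K * segN m n ω
  /-- the conformal contraction associated to the word `ω` on levels `m, …, n-1` -/
  wMap : (m n : ℕ) → ((j : Finset.Ico m n) → I j) →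
      EuclideanSpace ℝ (Fin d) → EuclideanSpace ℝ (Fin d)
  wMap_id : ∀ m (ω : (j : Finset.Ico m m) → I j) x, wMap m m ω x = x
  wMap_mapsTo : ∀ m n ω, MapsTo (wMap m n ω) X X
  /-- upper conformal bound: `φ_ω` is `‖Dφ_ω‖`-Lipschitz on `X` -/
  wMap_lip : ∀ m n ω, ∀ x ∈ X, ∀ y ∈ X,
      dist (wMap m n ω x) (wMap m n ω y) ≤ segN m n ω * dist x y
  /-- lower conformal bound (bounded distortion) -/
  wMap_colip : ∀ m n ω, ∀ x ∈ X, ∀ y ∈ X,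
      segN m n ω / K * dist x y ≤ dist (wMap m n ω x) (wMap m n ω y)
  /-- compatibility of the maps under splitting of words -/
  wMap_comp : ∀ m k n, m ≤ k → k ≤ n →
      ∀ (ω : (j : Finset.Ico m n) → I j) (ω₁ : (j : Finset.Ico m k) → I j)
        (ω₂ : (j : Finset.Ico k n) → I j),
        (∀ (j : ℕ) (h₁ : j ∈ Finset.Ico m k) (h₂ : j ∈ Finset.Ico m n),
            ω₁ ⟨j, h₁⟩ = ω ⟨j, h₂⟩) →
        (∀ (j : ℕ) (h₁ : j ∈ Finset.Ico k n) (h₂ : j ∈ Finset.Ico m n),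
            ω₂ ⟨j, h₁⟩ = ω ⟨j, h₂⟩) →
        ∀ x ∈ X, wMap m n ω x = wMap m k ω₁ (wMap k n ω₂ x)
  /-- the open set condition -/
  osc : ∀ n (a b : (j : Finset.Ico n (n+1)) → I j), a ≠ b →
      Disjoint (wMap n (n+1) a '' interior X) (wMap n (n+1) b '' interior X)

namespace NCIFS

variable {d : ℕ} (Φ : NCIFS d)

/-- Words occupying levels `m, …, n-1`. -/
abbrev Word (m n : ℕ) := (j : Finset.Ico m n) → Φ.I j

instance (m n : ℕ) : Nonempty (Φ.Word m n) :=
  ⟨fun j => Classical.choice (Φ.hI_ne j)⟩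

/-- The one-letter word at level `n` given by the index `i`. -/
def single (n : ℕ) (i : Φ.I n) : Φ.Word n (n+1) :=
  fun j => cast (congrArg Φ.I (show n = (j : ℕ) by
    have := Finset.mem_Ico.mp j.2; omega)) i

/-- `‖Dφ_i^{(n)}‖`, the derivative norm of the single map with index `i` at level `n`. -/
def Dnorm (n : ℕ) (i : Φ.I n) : ℝ := Φ.segN n (n+1) (Φ.single n i)

/-- The partition function `Z_n(t) = Σ_{ω ∈ I^n} ‖Dφ_ω‖^t`, valued in `[0,∞]`. -/
def Z (n : ℕ) (t : ℝ) : ℝ≥0∞ := ∑' ω : Φ.Word 0 n, ENNReal.ofReal (Φ.segN 0 n ω ^ t)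

/-- The lower pressure `P̲(t) = liminf (1/n) log Z_n(t)`, valued in `[-∞,∞]`. -/
def lowP (t : ℝ) : EReal :=
  liminf (fun n : ℕ => (Φ.Z n t).log * (((n : ℝ)⁻¹ : ℝ) : EReal)) atTop

/-- The upper pressure `P̄(t) = limsup (1/n) log Z_n(t)`. -/
def upP (t : ℝ) : EReal :=
  limsup (fun n : ℕ => (Φ.Z n t).log * (((n : ℝ)⁻¹ : ℝ) : EReal)) atTop

/-- The Bowen dimension `B(Φ) = sup {t ≥ 0 : P̲(t) > 0}` (and `0` if there is no such `t`). -/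
def Bdim : ℝ≥0∞ := ⨆ t : {t : ℝ // 0 ≤ t ∧ (0 : EReal) < Φ.lowP t}, ENNReal.ofReal t.1

/-- The limit set `J(Φ) = ⋂_n ⋃_{ω ∈ I^n} φ_ω(X)`. -/
def limitSet : Set (EuclideanSpace ℝ (Fin d)) :=
  ⋂ n, ⋃ ω : Φ.Word 0 n, Φ.wMap 0 n ω '' Φ.X

/-- The minimal derivative norm `c̲_n` at level `n`. -/
def cmin (n : ℕ) : ℝ := ⨅ i : Φ.I n, Φ.Dnorm n i

/-- The maximal derivative norm `c̄_n` at level `n`. -/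
def cmax (n : ℕ) : ℝ := ⨆ i : Φ.I n, Φ.Dnorm n i

/-- `ρ_n`, the maximal ratio of derivative norms at level `n`. -/
def ρ (n : ℕ) : ℝ := Φ.cmax n / Φ.cmin n

/-- The modified partition function
`Z̃_n(t) = Z_{n-1}(t) · (#I^{(n)})^{t/d} · c̲_n^t`. -/
def Zt (n : ℕ) (t : ℝ) : ℝ≥0∞ :=
  Φ.Z (n - 1) t * ENNReal.ofReal ((Nat.card (Φ.I n) : ℝ) ^ (t / (d : ℝ)) * Φ.cmin n ^ t)

/-- `P̃(t) = liminf (1/n) log Z̃_n(t)`. -/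
def tP (t : ℝ) : EReal :=
  liminf (fun n : ℕ => (Φ.Zt n t).log * (((n : ℝ)⁻¹ : ℝ) : EReal)) atTop

end NCIFS

namespace NCIFS

variable {d : ℕ} (Φ : NCIFS d)

lemma Dnorm_pos (n : ℕ) (i : Φ.I n) : 0 < Φ.Dnorm n i := Φ.segN_pos _ _ _

lemma Dnorm_le_eta (n : ℕ) (i : Φ.I n) : Φ.Dnorm n i ≤ Φ.η := by
  have := Φ.segN_contract n (n+1) (Φ.single n i)
  simpa [Dnorm] using this

lemma cmin_le (n : ℕ) [Finite (Φ.I n)] (i : Φ.I n) : Φ.cmin n ≤ Φ.Dnorm n i :=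
  ciInf_le (Set.Finite.bddBelow (Set.finite_range _)) i

lemma cmin_pos (n : ℕ) [Finite (Φ.I n)] : 0 < Φ.cmin n := by
  have := Φ.hI_ne n
  obtain ⟨i₀, hi₀⟩ := Finite.exists_min (Φ.Dnorm n)
  exact lt_of_lt_of_le (Φ.Dnorm_pos n i₀) (le_ciInf hi₀)

lemma single_injective (n : ℕ) : Function.Injective (Φ.single n) := by
  intro i j hij
  have := congrFun hij ⟨n, by simp⟩
  simpa [NCIFS.single] using this

lemma wMap_injOn (m n : ℕ) (ω : Φ.Word m n) : Set.InjOn (Φ.wMap m n ω) Φ.X := by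
  intro x hx y hy hxy
  have h1 := Φ.wMap_colip m n ω x hx y hy
  rw [hxy, dist_self] at h1
  have hs : 0 < Φ.segN m n ω / Φ.K := div_pos (Φ.segN_pos m n ω) (lt_of_lt_of_le one_pos Φ.hK)
  have hd0 : dist x y ≤ 0 := by nlinarith [dist_nonneg (x := x) (y := y)]
  exact dist_eq_zero.mp (le_antisymm hd0 dist_nonneg)

end NCIFS
open MeasureTheory Module in
lemma NCIFS.exists_card_bound {d : ℕ} (hd : 0 < d) (Φ : NCIFS d) [∀ n, Finite (Φ.I n)] :
    ∃ C : ℝ, 1 ≤ C ∧ ∀ n, (Nat.card (Φ.I n) : ℝ) * Φ.cmin n ^ (d : ℝ) ≤ C := by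
  haveI hHaar : (μH[(d : ℝ)] : Measure (EuclideanSpace ℝ (Fin d))).IsAddHaarMeasure := by
    have hrank : ((finrank ℝ (EuclideanSpace ℝ (Fin d))) : ℝ) = (d : ℝ) := by simp
    rw [← hrank]
    exact isAddHaarMeasure_hausdorffMeasure
  set μ : Measure (EuclideanSpace ℝ (Fin d)) := μH[(d : ℝ)] with hμ
  have hK0 : 0 < Φ.K := lt_of_lt_of_le one_pos Φ.hK
  -- interior point and ball
  have hint : (interior Φ.X).Nonempty := by
    rcases Φ.hX_nonempty with ⟨x, hx⟩
    rcases Set.eq_empty_or_nonempty (interior Φ.X) with he | hne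
    · exfalso
      have h1 := Φ.hX_regular
      rw [he, closure_empty] at h1
      rw [← h1] at hx
      exact hx
    · exact hne
  obtain ⟨x₀, hx₀⟩ := hint
  obtain ⟨ε, hε, hball⟩ := Metric.isOpen_iff.mp isOpen_interior x₀ hx₀
  have hr : 0 < ε / 2 := by linarith
  have hcb : Metric.closedBall x₀ (ε / 2) ⊆ interior Φ.X :=
    (Metric.closedBall_subset_ball (by linarith)).trans hball
  set v := μ (Metric.closedBall x₀ (ε / 2)) with hv
  have hv0 : 0 < v := Metric.measure_closedBall_pos μ x₀ hr
  have hvt : v ≠ ⊤ := (isCompact_closedBall x₀ (ε / 2)).measure_lt_top.ne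
  have hXt : μ Φ.X ≠ ⊤ := Φ.hX_compact.measure_lt_top.ne
  refine ⟨max 1 ((ENNReal.ofReal (Φ.K ^ (d : ℝ)) * μ Φ.X / v).toReal), le_max_left _ _, fun n => ?_⟩
  haveI := Fintype.ofFinite (Φ.I n)
  have hcmin0 : 0 < Φ.cmin n := Φ.cmin_pos n
  set B : Φ.I n → Set (EuclideanSpace ℝ (Fin d)) :=
    fun i => Φ.wMap n (n+1) (Φ.single n i) '' Metric.closedBall x₀ (ε / 2) with hB
  -- lower bound on each piece
  have key1 : ∀ i, ENNReal.ofReal ((Φ.cmin n / Φ.K) ^ (d : ℝ)) * v ≤ μ (B i) := by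
    intro i
    set f := Φ.wMap n (n+1) (Φ.single n i) with hf
    set s := Φ.Dnorm n i with hs
    have hs0 : 0 < s := Φ.Dnorm_pos n i
    have hinj : Set.InjOn f Φ.X := Φ.wMap_injOn n (n+1) (Φ.single n i)
    set g := Function.invFunOn f Φ.X with hg
    have hgf : ∀ x ∈ Φ.X, g (f x) = x := fun x hx => hinj.leftInvOn_invFunOn hx
    have hglip : LipschitzOnWith (Real.toNNReal (Φ.K / s)) g (f '' Φ.X) := by
      apply LipschitzOnWith.of_dist_le_mul
      rintro a ⟨x, hx, rfl⟩ b ⟨y, hy, rfl⟩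
      rw [hgf x hx, hgf y hy, Real.coe_toNNReal _ (by positivity)]
      have hco := Φ.wMap_colip n (n+1) (Φ.single n i) x hx y hy
      have hss : Φ.segN n (n + 1) (Φ.single n i) = s := rfl
      rw [hss, ← hf, div_mul_eq_mul_div, div_le_iff₀ hK0] at hco
      rw [div_mul_eq_mul_div, le_div_iff₀ hs0]
      linarith [mul_comm (dist x y) s, mul_comm Φ.K (dist (f x) (f y)), hco]
    have hcbX : Metric.closedBall x₀ (ε / 2) ⊆ Φ.X := hcb.trans interior_subset
    have hsub : Metric.closedBall x₀ (ε / 2) ⊆ g '' (B i) := by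
      intro y hy
      exact ⟨f y, Set.mem_image_of_mem f hy, hgf y (hcbX hy)⟩
    have hBsub : B i ⊆ f '' Φ.X := Set.image_mono (f := f) hcbX
    have himg : μ (g '' (B i)) ≤
        (ENNReal.ofReal (Φ.K / s)) ^ (d : ℝ) * μ (B i) :=
      (hglip.mono hBsub).hausdorffMeasure_image_le (by positivity)
    have hv_le : v ≤ ENNReal.ofReal ((Φ.K / s) ^ (d : ℝ)) * μ (B i) := by
      rw [← ENNReal.ofReal_rpow_of_pos (by positivity)]
      exact le_trans (measure_mono hsub) himg
    have hmul1 : (Φ.cmin n / Φ.K) ^ (d : ℝ) ≤ (s / Φ.K) ^ (d : ℝ) :=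
      Real.rpow_le_rpow (by positivity) (by gcongr; exact Φ.cmin_le n i) (by positivity)
    have hone : (s / Φ.K) * (Φ.K / s) = 1 := by field_simp
    calc ENNReal.ofReal ((Φ.cmin n / Φ.K) ^ (d : ℝ)) * v
        ≤ ENNReal.ofReal ((s / Φ.K) ^ (d : ℝ)) * v :=
          mul_le_mul_left (ENNReal.ofReal_le_ofReal hmul1) v
      _ ≤ ENNReal.ofReal ((s / Φ.K) ^ (d : ℝ)) * (ENNReal.ofReal ((Φ.K / s) ^ (d : ℝ)) * μ (B i)) :=
          mul_le_mul_right hv_le _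
      _ = (ENNReal.ofReal ((s / Φ.K) ^ (d : ℝ)) * ENNReal.ofReal ((Φ.K / s) ^ (d : ℝ))) * μ (B i) :=
          (mul_assoc _ _ _).symm
      _ = μ (B i) := by
          rw [← ENNReal.ofReal_mul (by positivity), ← Real.mul_rpow (by positivity) (by positivity),
            hone, Real.one_rpow, ENNReal.ofReal_one, one_mul]
  -- inclusion, measurability, disjointness
  have hBX : ∀ i, B i ⊆ Φ.X := fun i =>
    (Set.image_mono (f := Φ.wMap n (n+1) (Φ.single n i)) (hcb.trans interior_subset)).trans
      ((Φ.wMap_mapsTo n (n+1) (Φ.single n i)).image_subset)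
  have hBm : ∀ i, MeasurableSet (B i) := by
    intro i
    have hlip : LipschitzOnWith (Real.toNNReal (Φ.segN n (n+1) (Φ.single n i)))
        (Φ.wMap n (n+1) (Φ.single n i)) Φ.X := by
      apply LipschitzOnWith.of_dist_le_mul
      intro x hx y hy
      rw [Real.coe_toNNReal _ (Φ.segN_pos _ _ _).le]
      exact Φ.wMap_lip n (n+1) _ x hx y hy
    exact ((isCompact_closedBall x₀ (ε / 2)).image_of_continuousOn
      (hlip.continuousOn.mono (hcb.trans interior_subset))).isClosed.measurableSet
  have hdisj : Pairwise (Function.onFun Disjoint B) := by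
    intro i j hij
    have hosc := Φ.osc n (Φ.single n i) (Φ.single n j)
      (fun hh => hij (Φ.single_injective n hh))
    exact hosc.mono (Set.image_mono hcb) (Set.image_mono hcb)
  -- summing up
  have hsum : (Nat.card (Φ.I n) : ℝ≥0∞) * (ENNReal.ofReal ((Φ.cmin n / Φ.K) ^ (d : ℝ)) * v)
      ≤ μ Φ.X := by
    have h1 : μ (⋃ i, B i) ≤ μ Φ.X := measure_mono (Set.iUnion_subset hBX)
    rw [measure_iUnion hdisj hBm, tsum_fintype] at h1
    refine le_trans ?_ h1
    calc (Nat.card (Φ.I n) : ℝ≥0∞) * (ENNReal.ofReal ((Φ.cmin n / Φ.K) ^ (d : ℝ)) * v)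
        = ∑ _i : Φ.I n, (ENNReal.ofReal ((Φ.cmin n / Φ.K) ^ (d : ℝ)) * v) := by
          rw [Finset.sum_const, Finset.card_univ, Nat.card_eq_fintype_card, nsmul_eq_mul]
      _ ≤ ∑ i, μ (B i) := Finset.sum_le_sum (fun i _ => key1 i)
  have hmulK : ENNReal.ofReal (Φ.K ^ (d : ℝ)) * ENNReal.ofReal ((Φ.cmin n / Φ.K) ^ (d : ℝ))
      = ENNReal.ofReal (Φ.cmin n ^ (d : ℝ)) := by
    rw [← ENNReal.ofReal_mul (by positivity), ← Real.mul_rpow hK0.le (by positivity),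
      mul_div_cancel₀ _ hK0.ne']
  have h2 : (Nat.card (Φ.I n) : ℝ≥0∞) * ENNReal.ofReal (Φ.cmin n ^ (d : ℝ)) * v
      ≤ ENNReal.ofReal (Φ.K ^ (d : ℝ)) * μ Φ.X := by
    calc (Nat.card (Φ.I n) : ℝ≥0∞) * ENNReal.ofReal (Φ.cmin n ^ (d : ℝ)) * v
        = ENNReal.ofReal (Φ.K ^ (d : ℝ)) *
            ((Nat.card (Φ.I n) : ℝ≥0∞) * (ENNReal.ofReal ((Φ.cmin n / Φ.K) ^ (d : ℝ)) * v)) := by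
          rw [← hmulK]; ring
      _ ≤ ENNReal.ofReal (Φ.K ^ (d : ℝ)) * μ Φ.X := mul_le_mul_right hsum _
  have h4 : (Nat.card (Φ.I n) : ℝ≥0∞) * ENNReal.ofReal (Φ.cmin n ^ (d : ℝ))
      ≤ ENNReal.ofReal (Φ.K ^ (d : ℝ)) * μ Φ.X / v :=
    (ENNReal.le_div_iff_mul_le (Or.inl hv0.ne') (Or.inl hvt)).mpr h2
  have ht : ENNReal.ofReal (Φ.K ^ (d : ℝ)) * μ Φ.X / v ≠ ⊤ :=
    (ENNReal.div_lt_top (ENNReal.mul_ne_top ENNReal.ofReal_ne_top hXt) hv0.ne').ne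
  have h5 := ENNReal.toReal_mono ht h4
  rw [ENNReal.toReal_mul, ENNReal.toReal_natCast, ENNReal.toReal_ofReal (by positivity)] at h5
  exact h5.trans (le_max_right _ _)
namespace NCIFS

variable {d : ℕ} (Φ : NCIFS d) [∀ n, Finite (Φ.I n)]

lemma Z_pos (m : ℕ) (t : ℝ) : 0 < Φ.Z m t := by
  obtain ⟨ω⟩ : Nonempty (Φ.Word 0 m) := inferInstance
  refine lt_of_lt_of_le ?_ (ENNReal.le_tsum ω)
  exact ENNReal.ofReal_pos.mpr (Real.rpow_pos_of_pos (Φ.segN_pos 0 m ω) t)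

lemma Z_ne_top (m : ℕ) (t : ℝ) : Φ.Z m t ≠ ⊤ := by
  haveI : Fintype (Φ.Word 0 m) := Fintype.ofFinite _
  rw [NCIFS.Z, tsum_fintype]
  exact (ENNReal.sum_lt_top.mpr (fun ω _ => ENNReal.ofReal_lt_top)).ne

lemma card_pos (n : ℕ) : 0 < (Nat.card (Φ.I n) : ℝ) := by
  have := Φ.hI_ne n
  exact_mod_cast Nat.card_pos

lemma Zt_pos (n : ℕ) (t : ℝ) : 0 < Φ.Zt n t := by
  refine ENNReal.mul_pos (Φ.Z_pos (n-1) t).ne' ?_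
  refine (ENNReal.ofReal_pos.mpr ?_).ne'
  have h1 : 0 < (Nat.card (Φ.I n) : ℝ) := Φ.card_pos n
  have h2 : 0 < Φ.cmin n := Φ.cmin_pos n
  positivity

lemma Zt_ne_top (n : ℕ) (t : ℝ) : Φ.Zt n t ≠ ⊤ :=
  ENNReal.mul_ne_top (Φ.Z_ne_top (n-1) t) ENNReal.ofReal_ne_top

lemma Zt_le (hd : 0 < d) (C : ℝ) (hC1 : 1 ≤ C)
    (hCb : ∀ n, (Nat.card (Φ.I n) : ℝ) * Φ.cmin n ^ (d : ℝ) ≤ C)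
    (t t' : ℝ) (h : t' < t) (n : ℕ) :
    Φ.Zt n t * ENNReal.ofReal
        (Φ.η ^ (((n - 1 : ℕ) : ℝ) * (t' - t)) * C ^ ((t' - t) / (d : ℝ)))
      ≤ Φ.Zt n t' := by
  have hη0 : 0 < Φ.η := Φ.hη_pos
  have hC0 : (0 : ℝ) < C := lt_of_lt_of_le one_pos hC1
  have hs0 : t' - t ≤ 0 := by linarith
  have ht'eq : t' = t + (t' - t) := by ring
  -- part A : partition function comparison
  have hA : Φ.Z (n - 1) t * ENNReal.ofReal (Φ.η ^ (((n - 1 : ℕ) : ℝ) * (t' - t)))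
      ≤ Φ.Z (n - 1) t' := by
    rw [NCIFS.Z, NCIFS.Z, ← ENNReal.tsum_mul_right]
    refine ENNReal.tsum_le_tsum fun ω => ?_
    have hω0 : 0 < Φ.segN 0 (n - 1) ω := Φ.segN_pos 0 (n - 1) ω
    rw [← ENNReal.ofReal_mul (by positivity)]
    refine ENNReal.ofReal_le_ofReal ?_
    have hωc : Φ.segN 0 (n - 1) ω ≤ Φ.η ^ (n - 1) := by
      have := Φ.segN_contract 0 (n - 1) ω
      simpa using this
    have hstep : (Φ.η ^ (n - 1) : ℝ) ^ (t' - t) ≤ Φ.segN 0 (n - 1) ω ^ (t' - t) :=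
      Real.rpow_le_rpow_of_nonpos hω0 hωc hs0
    calc Φ.segN 0 (n - 1) ω ^ t * Φ.η ^ (((n - 1 : ℕ) : ℝ) * (t' - t))
        = Φ.segN 0 (n - 1) ω ^ t * (Φ.η ^ (n - 1) : ℝ) ^ (t' - t) := by
          rw [← Real.rpow_natCast Φ.η (n - 1), ← Real.rpow_mul hη0.le]
      _ ≤ Φ.segN 0 (n - 1) ω ^ t * Φ.segN 0 (n - 1) ω ^ (t' - t) :=
          mul_le_mul_of_nonneg_left hstep (by positivity)
      _ = Φ.segN 0 (n - 1) ω ^ t' := by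
          rw [← Real.rpow_add hω0]; ring_nf
  -- part B : correction factor comparison
  have ha0 : 0 < (Nat.card (Φ.I n) : ℝ) := Φ.card_pos n
  have hb0 : 0 < Φ.cmin n := Φ.cmin_pos n
  have hd0 : (0 : ℝ) < d := by exact_mod_cast hd
  have hB : ENNReal.ofReal ((Nat.card (Φ.I n) : ℝ) ^ (t / (d : ℝ)) * Φ.cmin n ^ t)
        * ENNReal.ofReal (C ^ ((t' - t) / (d : ℝ)))
      ≤ ENNReal.ofReal ((Nat.card (Φ.I n) : ℝ) ^ (t' / (d : ℝ)) * Φ.cmin n ^ t') := by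
    rw [← ENNReal.ofReal_mul (by positivity)]
    refine ENNReal.ofReal_le_ofReal ?_
    have hkey : C ^ ((t' - t) / (d : ℝ)) ≤
        (Nat.card (Φ.I n) : ℝ) ^ ((t' - t) / (d : ℝ)) * Φ.cmin n ^ (t' - t) := by
      have heq : ((Nat.card (Φ.I n) : ℝ) * Φ.cmin n ^ (d : ℝ)) ^ ((t' - t) / (d : ℝ))
          = (Nat.card (Φ.I n) : ℝ) ^ ((t' - t) / (d : ℝ)) * Φ.cmin n ^ (t' - t) := by
        rw [Real.mul_rpow ha0.le (by positivity), ← Real.rpow_mul hb0.le]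
        congr 2
        field_simp
      rw [← heq]
      exact Real.rpow_le_rpow_of_nonpos (by positivity) (hCb n)
        (div_nonpos_of_nonpos_of_nonneg hs0 hd0.le)
    calc (Nat.card (Φ.I n) : ℝ) ^ (t / (d : ℝ)) * Φ.cmin n ^ t * C ^ ((t' - t) / (d : ℝ))
        ≤ (Nat.card (Φ.I n) : ℝ) ^ (t / (d : ℝ)) * Φ.cmin n ^ t *
            ((Nat.card (Φ.I n) : ℝ) ^ ((t' - t) / (d : ℝ)) * Φ.cmin n ^ (t' - t)) :=
          mul_le_mul_of_nonneg_left hkey (by positivity)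
      _ = (Nat.card (Φ.I n) : ℝ) ^ (t' / (d : ℝ)) * Φ.cmin n ^ t' := by
          rw [mul_mul_mul_comm, ← Real.rpow_add ha0, ← Real.rpow_add hb0, ← add_div]
          ring_nf
  calc Φ.Zt n t * ENNReal.ofReal
        (Φ.η ^ (((n - 1 : ℕ) : ℝ) * (t' - t)) * C ^ ((t' - t) / (d : ℝ)))
      = (Φ.Z (n - 1) t * ENNReal.ofReal (Φ.η ^ (((n - 1 : ℕ) : ℝ) * (t' - t)))) *
          (ENNReal.ofReal ((Nat.card (Φ.I n) : ℝ) ^ (t / (d : ℝ)) * Φ.cmin n ^ t)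
            * ENNReal.ofReal (C ^ ((t' - t) / (d : ℝ)))) := by
        rw [ENNReal.ofReal_mul (p := Φ.η ^ (((n - 1 : ℕ) : ℝ) * (t' - t))) (by positivity),
          NCIFS.Zt]
        ac_rfl
    _ ≤ Φ.Z (n - 1) t' * ENNReal.ofReal ((Nat.card (Φ.I n) : ℝ) ^ (t' / (d : ℝ)) * Φ.cmin n ^ t') :=
        mul_le_mul' hA hB
    _ = Φ.Zt n t' := rfl

end NCIFS
/-- For a finite NCIFS, the modified pressure
`P̃(t) = liminf (1/n) log Z̃_n(t)` is strictly decreasing where finite: if `t' < t`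
(with `t' ≥ 0`) and `P̃(t)` is finite, then `P̃(t') ≥ P̃(t) + (t - t')·log(1/η)`. -/
theorem NCIFS.tP_strict_anti {d : ℕ} (hd : 0 < d) (Φ : NCIFS d) [∀ n, Finite (Φ.I n)]
    (t t' : ℝ) (ht' : 0 ≤ t') (h : t' < t)
    (hfin_top : Φ.tP t ≠ ⊤) (hfin_bot : Φ.tP t ≠ ⊥) :
    Φ.tP t + (((t - t') * Real.log (1 / Φ.η) : ℝ) : EReal) ≤ Φ.tP t' := by
  obtain ⟨C, hC1, hCb⟩ := NCIFS.exists_card_bound hd Φ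
  have hη0 : 0 < Φ.η := Φ.hη_pos
  have hC0 : (0 : ℝ) < C := lt_of_lt_of_le one_pos hC1
  set c : ℕ → ℝ := fun n =>
    (((n - 1 : ℕ) : ℝ) * ((n : ℝ))⁻¹) * ((t' - t) * Real.log Φ.η)
      + (((t' - t) / (d : ℝ)) * Real.log C) * ((n : ℝ))⁻¹ with hc
  -- eventual pointwise bound
  have hmono : ∀ᶠ n : ℕ in atTop,
      (Φ.Zt n t).log * (((n : ℝ)⁻¹ : ℝ) : EReal) + ((c n : ℝ) : EReal)
        ≤ (Φ.Zt n t').log * (((n : ℝ)⁻¹ : ℝ) : EReal) := by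
    filter_upwards [eventually_ge_atTop 1] with n hn
    have hq : 0 < Φ.η ^ (((n - 1 : ℕ) : ℝ) * (t' - t)) * C ^ ((t' - t) / (d : ℝ)) := by
      positivity
    have h2 := ENNReal.log_monotone (Φ.Zt_le hd C hC1 hCb t t' h n)
    rw [ENNReal.log_mul_add, ENNReal.log_ofReal_of_pos hq,
      ENNReal.log_pos_real (Φ.Zt_pos n t).ne' (Φ.Zt_ne_top n t),
      ENNReal.log_pos_real (Φ.Zt_pos n t').ne' (Φ.Zt_ne_top n t'),
      ← EReal.coe_add, EReal.coe_le_coe_iff] at h2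
    rw [ENNReal.log_pos_real (Φ.Zt_pos n t).ne' (Φ.Zt_ne_top n t),
      ENNReal.log_pos_real (Φ.Zt_pos n t').ne' (Φ.Zt_ne_top n t'),
      ← EReal.coe_mul, ← EReal.coe_mul, ← EReal.coe_add, EReal.coe_le_coe_iff]
    have hlog : Real.log (Φ.η ^ (((n - 1 : ℕ) : ℝ) * (t' - t)) * C ^ ((t' - t) / (d : ℝ)))
        = ((n - 1 : ℕ) : ℝ) * (t' - t) * Real.log Φ.η
          + ((t' - t) / (d : ℝ)) * Real.log C := by
      rw [Real.log_mul (by positivity) (by positivity), Real.log_rpow hη0, Real.log_rpow hC0]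
    have hninv : (0 : ℝ) ≤ ((n : ℝ))⁻¹ := by positivity
    have h3 := mul_le_mul_of_nonneg_right h2 hninv
    have hcn : c n = Real.log (Φ.η ^ (((n - 1 : ℕ) : ℝ) * (t' - t))
        * C ^ ((t' - t) / (d : ℝ))) * ((n : ℝ))⁻¹ := by
      rw [hlog, hc]; ring
    rw [hcn]
    nlinarith [h3]
  -- liminf manipulations
  have hstep1 : liminf (fun n : ℕ =>
      (Φ.Zt n t).log * (((n : ℝ)⁻¹ : ℝ) : EReal) + ((c n : ℝ) : EReal)) atTop ≤ Φ.tP t' :=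
    liminf_le_liminf hmono
  have hstep2 : Φ.tP t + liminf (fun n : ℕ => ((c n : ℝ) : EReal)) atTop
      ≤ liminf (fun n : ℕ =>
        (Φ.Zt n t).log * (((n : ℝ)⁻¹ : ℝ) : EReal) + ((c n : ℝ) : EReal)) atTop := by
    rw [NCIFS.tP]
    exact EReal.le_liminf_add
  have hinv : Tendsto (fun n : ℕ => ((n : ℝ))⁻¹) atTop (𝓝 0) :=
    tendsto_inv_atTop_nhds_zero_nat
  have h1t : Tendsto (fun n : ℕ => ((n - 1 : ℕ) : ℝ) * ((n : ℝ))⁻¹) atTop (𝓝 1) := by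
    have heq : ∀ᶠ n : ℕ in atTop,
        (1 : ℝ) - ((n : ℝ))⁻¹ = ((n - 1 : ℕ) : ℝ) * ((n : ℝ))⁻¹ := by
      filter_upwards [eventually_ge_atTop 1] with n hn
      have hn0 : (0 : ℝ) < (n : ℝ) := by
        exact_mod_cast Nat.lt_of_lt_of_le Nat.zero_lt_one hn
      rw [Nat.cast_sub hn, Nat.cast_one]
      field_simp
    refine Tendsto.congr' heq ?_
    simpa using tendsto_const_nhds.sub hinv
  have hctend : Tendsto (fun n : ℕ => ((c n : ℝ) : EReal)) atTop
      (𝓝 (((t' - t) * Real.log Φ.η : ℝ) : EReal)) := by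
    apply (continuous_coe_real_ereal.tendsto _).comp
    have htot := Tendsto.add
      (h1t.mul (tendsto_const_nhds (x := (t' - t) * Real.log Φ.η)))
      ((tendsto_const_nhds (x := ((t' - t) / (d : ℝ)) * Real.log C)).mul hinv)
    simpa [hc] using htot
  have hliminfc : liminf (fun n : ℕ => ((c n : ℝ) : EReal)) atTop
      = (((t' - t) * Real.log Φ.η : ℝ) : EReal) := hctend.liminf_eq
  have hconst : ((t - t') * Real.log (1 / Φ.η) : ℝ) = ((t' - t) * Real.log Φ.η : ℝ) := by
    rw [one_div, Real.log_inv]; ring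
  calc Φ.tP t + (((t - t') * Real.log (1 / Φ.η) : ℝ) : EReal)
      = Φ.tP t + liminf (fun n : ℕ => ((c n : ℝ) : EReal)) atTop := by
        rw [hliminfc, hconst]
    _ ≤ liminf (fun n : ℕ =>
        (Φ.Zt n t).log * (((n : ℝ)⁻¹ : ℝ) : EReal) + ((c n : ℝ) : EReal)) atTop := hstep2
    _ ≤ Φ.tP t' := hstep1
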